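/- Fix Runge–Kutta coefficients a_{ij}, b_i (i,j = 1,…,s) with all b_i ≠ 0, and define ā_{ij} by the symplecticity condition b_i ā_{ij} + b_j a_{ji} = b_i b_j for all i,j. Consider the discrete Lagrangian L_d(q, q̄) = h Σ_{i=1}^s b_i L(Q_i, Q̇_i), where the internal stages satisfy Q_i = q + h Σ_j a_{ij} Q̇_j and are chosen to extremize this sum subject to the constraint q̄ = q + h Σ_i b_i Q̇_i. Then the variational integrator defined by the discrete Euler–Lagrange equations D₂L_d(q_{k−1}, q_k) + D₁L_d(q_k, q_{k+1}) = 0, with discrete momenta p_k = D₂L_d(q_{k−1}, q_k) = −D₁L_d(q_k, q_{k+1}), is equivalent to the partitioned Runge–Kutta method with coefficients (a_{ij}, ā_{ij}, b_i) applied to the 'Hamiltonian' differential-algebraic system p = α(q), ṗ = Dα(q)ᵀ q̇ − ∇H(q); namely the scheme: P_i = α(Q_i), Ṗ_i = Dα(Q_i)ᵀ Q̇_i − ∇H(Q_i), Q_i = q + h Σ_j a_{ij} Q̇_j, P_i = p + h Σ_j ā_{ij} Ṗ_j (i = 1,…,s), q̄ = q + h Σ_j b_j Q̇_j, p̄ =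 p + h Σ_j b_j Ṗ_j. -/

import Mathlib

open Matrix

/-- The Jacobian matrix `(Dα)_{μν} = ∂α_μ/∂q^ν` of a map `α : ℝ^n → ℝ^n`. -/
noncomputable def jac {n : ℕ} (f : (Fin n → ℝ) → (Fin n → ℝ)) (q : Fin n → ℝ) :
    Matrix (Fin n) (Fin n) ℝ :=
  fun μ ν => fderiv ℝ f q (Pi.single ν 1) μ

/-- The gradient `∇H` of a function `H : ℝ^n → ℝ`. -/
noncomputable def grad {n : ℕ} (H : (Fin n → ℝ) → ℝ) (q : Fin n → ℝ) : Fin n → ℝ :=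
  fun μ => fderiv ℝ H q (Pi.single μ 1)

lemma clm_eq_sum {n : ℕ} {F : Type*} [NormedAddCommGroup F] [NormedSpace ℝ F]
    (L : (Fin n → ℝ) →L[ℝ] F) (w : Fin n → ℝ) :
    L w = ∑ ν, w ν • L (Pi.single ν 1) := by
  have hw : w = ∑ ν, Pi.single ν (w ν) := (Finset.univ_sum_single w).symm
  calc L w = L (∑ ν, Pi.single ν (w ν)) := by rw [← hw]
    _ = ∑ ν, L (Pi.single ν (w ν)) := map_sum L _ _
    _ = ∑ ν, w ν • L (Pi.single ν 1) := by
        refine Finset.sum_congr rfl fun ν _ => ?_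
        rw [← map_smul L]
        congr 1
        ext μ
        by_cases hμ : μ = ν <;> simp [hμ, Pi.single_apply]

lemma jac_mulVec {n : ℕ} (f : (Fin n → ℝ) → (Fin n → ℝ)) (x w : Fin n → ℝ) :
    jac f x *ᵥ w = fderiv ℝ f x w := by
  funext μ
  rw [clm_eq_sum (fderiv ℝ f x) w]
  simp only [mulVec, dotProduct, jac, Finset.sum_apply, Pi.smul_apply, smul_eq_mul]
  exact Finset.sum_congr rfl fun ν _ => mul_comm _ _

lemma grad_dot {n : ℕ} (H : (Fin n → ℝ) → ℝ) (x w : Fin n → ℝ) :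
    grad H x ⬝ᵥ w = fderiv ℝ H x w := by
  rw [clm_eq_sum (fderiv ℝ H x) w]
  simp only [dotProduct, grad, smul_eq_mul]
  exact Finset.sum_congr rfl fun ν _ => mul_comm _ _

lemma fderiv_eval {n : ℕ} {E : Type*} [NormedAddCommGroup E] [NormedSpace ℝ E]
    {f : E → (Fin n → ℝ)} {x : E} (hf : DifferentiableAt ℝ f x) (μ : Fin n) (v : E) :
    fderiv ℝ (fun y => f y μ) x v = fderiv ℝ f x v μ := by
  have : (fun y => f y μ) = (ContinuousLinearMap.proj μ : (Fin n → ℝ) →L[ℝ] ℝ) ∘ f := rfl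
  rw [this, fderiv_comp x ((ContinuousLinearMap.proj μ).differentiableAt) hf,
    ContinuousLinearMap.fderiv]
  rfl

lemma fderiv_dot {n : ℕ} {E : Type*} [NormedAddCommGroup E] [NormedSpace ℝ E]
    {f g : E → (Fin n → ℝ)} {x : E} (hf : DifferentiableAt ℝ f x)
    (hg : DifferentiableAt ℝ g x) (v : E) :
    fderiv ℝ (fun y => f y ⬝ᵥ g y) x v
      = fderiv ℝ f x v ⬝ᵥ g x + f x ⬝ᵥ fderiv ℝ g x v := by
  have hfμ : ∀ μ, DifferentiableAt ℝ (fun y => f y μ) x := fun μ =>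
    ((ContinuousLinearMap.proj μ : (Fin n → ℝ) →L[ℝ] ℝ).differentiableAt).comp x hf
  have hgμ : ∀ μ, DifferentiableAt ℝ (fun y => g y μ) x := fun μ =>
    ((ContinuousLinearMap.proj μ : (Fin n → ℝ) →L[ℝ] ℝ).differentiableAt).comp x hg
  have : (fun y => f y ⬝ᵥ g y) = fun y => ∑ μ, f y μ * g y μ := rfl
  rw [this]
  have hsum := fderiv_fun_sum (u := Finset.univ)
    (A := fun μ (y : E) => f y μ * g y μ) (x := x)
    (fun μ _ => (hfμ μ).mul (hgμ μ))
  rw [show (fun y => ∑ μ, f y μ * g y μ) = (fun y => ∑ μ ∈ Finset.univ, f y μ * g y μ) from rfl,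
    hsum]
  simp only [ContinuousLinearMap.coe_sum', Finset.sum_apply, dotProduct]
  rw [← Finset.sum_add_distrib]
  refine Finset.sum_congr rfl fun μ _ => ?_
  rw [fderiv_fun_mul (hfμ μ) (hgμ μ)]
  simp only [ContinuousLinearMap.add_apply, ContinuousLinearMap.smul_apply, smul_eq_mul]
  rw [fderiv_eval hf μ v, fderiv_eval hg μ v]
  ring

lemma differentiableAt_dot {n : ℕ} {E : Type*} [NormedAddCommGroup E] [NormedSpace ℝ E]
    {f g : E → (Fin n → ℝ)} {x : E} (hf : DifferentiableAt ℝ f x)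
    (hg : DifferentiableAt ℝ g x) :
    DifferentiableAt ℝ (fun y => f y ⬝ᵥ g y) x := by
  have hfμ : ∀ μ, DifferentiableAt ℝ (fun y => f y μ) x := fun μ =>
    ((ContinuousLinearMap.proj μ : (Fin n → ℝ) →L[ℝ] ℝ).differentiableAt).comp x hf
  have hgμ : ∀ μ, DifferentiableAt ℝ (fun y => g y μ) x := fun μ =>
    ((ContinuousLinearMap.proj μ : (Fin n → ℝ) →L[ℝ] ℝ).differentiableAt).comp x hg
  have : (fun y => f y ⬝ᵥ g y) = fun y => ∑ μ ∈ Finset.univ, f y μ * g y μ := rfl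
  rw [this]
  exact DifferentiableAt.fun_sum fun μ _ => (hfμ μ).mul (hgμ μ)

lemma fderiv_Ld_aux {n s : ℕ} (α : (Fin n → ℝ) → (Fin n → ℝ)) (H : (Fin n → ℝ) → ℝ)
    (hα : Differentiable ℝ α) (hH : Differentiable ℝ H) (b : Fin s → ℝ) (h : ℝ)
    (f g : Fin s → (Fin n → ℝ) → (Fin n → ℝ))
    (hf : ∀ i, Differentiable ℝ (f i)) (hg : ∀ i, Differentiable ℝ (g i))
    (x v : Fin n → ℝ) :
    fderiv ℝ (fun y => h * ∑ i, b i * (α (f i y) ⬝ᵥ g i y - H (f i y))) x v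
      = h * ∑ i, b i *
          (((jac α (f i x))ᵀ *ᵥ g i x - grad H (f i x)) ⬝ᵥ fderiv ℝ (f i) x v
            + α (f i x) ⬝ᵥ fderiv ℝ (g i) x v) := by
  have hαf : ∀ i, DifferentiableAt ℝ (fun y => α (f i y)) x := fun i =>
    (hα _).comp x ((hf i) x)
  have hHf : ∀ i, DifferentiableAt ℝ (fun y => H (f i y)) x := fun i =>
    (hH _).comp x ((hf i) x)
  have hterm : ∀ i, DifferentiableAt ℝ (fun y => α (f i y) ⬝ᵥ g i y - H (f i y)) x :=
    fun i => (differentiableAt_dot (hαf i) ((hg i) x)).sub (hHf i)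
  rw [fderiv_const_mul (by exact DifferentiableAt.fun_sum fun i _ => (hterm i).const_mul (b i)) h]
  simp only [ContinuousLinearMap.smul_apply, smul_eq_mul]
  congr 1
  rw [fderiv_fun_sum (fun i _ => (hterm i).const_mul (b i))]
  simp only [ContinuousLinearMap.coe_sum', Finset.sum_apply]
  refine Finset.sum_congr rfl fun i _ => ?_
  rw [fderiv_const_mul (hterm i) (b i)]
  simp only [ContinuousLinearMap.smul_apply, smul_eq_mul]
  congr 1
  rw [fderiv_fun_sub (differentiableAt_dot (hαf i) ((hg i) x)) (hHf i)]
  simp only [ContinuousLinearMap.sub_apply]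
  rw [fderiv_dot (hαf i) ((hg i) x) v]
  have hchainα : fderiv ℝ (fun y => α (f i y)) x v = fderiv ℝ α (f i x) (fderiv ℝ (f i) x v) := by
    rw [show (fun y => α (f i y)) = α ∘ f i from rfl,
      fderiv_comp x (hα _) ((hf i) x)]; rfl
  have hchainH : fderiv ℝ (fun y => H (f i y)) x v = fderiv ℝ H (f i x) (fderiv ℝ (f i) x v) := by
    rw [show (fun y => H (f i y)) = H ∘ f i from rfl,
      fderiv_comp x (hH _) ((hf i) x)]; rfl
  rw [hchainα, hchainH, ← jac_mulVec α (f i x), ← grad_dot H (f i x)]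
  rw [sub_dotProduct, mulVec_transpose, dotProduct_comm (jac α (f i x) *ᵥ _) (g i x),
    dotProduct_mulVec]
  ring

lemma dotProduct_sum' {n : ℕ} {ι : Type*} (t : Finset ι) (w : Fin n → ℝ)
    (f : ι → Fin n → ℝ) : w ⬝ᵥ (∑ i ∈ t, f i) = ∑ i ∈ t, w ⬝ᵥ f i := by
  simp only [dotProduct, Finset.sum_apply, Finset.mul_sum]
  exact Finset.sum_comm

lemma sum_dotProduct' {n : ℕ} {ι : Type*} (t : Finset ι) (f : ι → Fin n → ℝ)
    (w : Fin n → ℝ) : (∑ i ∈ t, f i) ⬝ᵥ w = ∑ i ∈ t, f i ⬝ᵥ w := by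
  simp only [dotProduct, Finset.sum_apply, Finset.sum_mul]
  exact Finset.sum_comm

lemma fderiv_affine_comb {n s : ℕ} (h : ℝ) (c : Fin s → ℝ)
    (g : Fin s → (Fin n → ℝ) → (Fin n → ℝ)) (hg : ∀ j, Differentiable ℝ (g j))
    (x v : Fin n → ℝ) :
    fderiv ℝ (fun y => y + h • ∑ j, c j • g j y) x v
      = v + h • ∑ j, c j • fderiv ℝ (g j) x v := by
  have hd : ∀ j ∈ Finset.univ, DifferentiableAt ℝ (fun y : Fin n → ℝ => c j • g j y) x :=
    fun j _ => ((hg j) x).const_smul (c j)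
  have hsum : DifferentiableAt ℝ (fun y : Fin n → ℝ => ∑ j, c j • g j y) x :=
    DifferentiableAt.fun_sum hd
  rw [fderiv_fun_add differentiableAt_fun_id (hsum.fun_const_smul h)]
  simp only [ContinuousLinearMap.add_apply]
  rw [fderiv_id']
  congr 1
  rw [fderiv_fun_const_smul hsum h]
  simp only [ContinuousLinearMap.smul_apply]
  congr 1
  rw [fderiv_fun_sum hd]
  simp only [ContinuousLinearMap.coe_sum', Finset.sum_apply]
  exact Finset.sum_congr rfl fun j _ => by
    rw [fderiv_fun_const_smul ((hg j) x) (c j)]; rfl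

lemma fderiv_affine_comb_const {n s : ℕ} (q0 : Fin n → ℝ) (h : ℝ) (c : Fin s → ℝ)
    (g : Fin s → (Fin n → ℝ) → (Fin n → ℝ)) (hg : ∀ j, Differentiable ℝ (g j))
    (x v : Fin n → ℝ) :
    fderiv ℝ (fun y => q0 + h • ∑ j, c j • g j y) x v
      = (0 : Fin n → ℝ) + h • ∑ j, c j • fderiv ℝ (g j) x v := by
  have hd : ∀ j ∈ Finset.univ, DifferentiableAt ℝ (fun y : Fin n → ℝ => c j • g j y) x :=
    fun j _ => ((hg j) x).const_smul (c j)
  have hsum : DifferentiableAt ℝ (fun y : Fin n → ℝ => ∑ j, c j • g j y) x :=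
    DifferentiableAt.fun_sum hd
  rw [fderiv_const_add, zero_add]
  rw [fderiv_fun_const_smul hsum h]
  simp only [ContinuousLinearMap.smul_apply]
  congr 1
  rw [fderiv_fun_sum hd]
  simp only [ContinuousLinearMap.coe_sum', Finset.sum_apply]
  exact Finset.sum_congr rfl fun j _ => by
    rw [fderiv_fun_const_smul ((hg j) x) (c j)]; rfl

/-- The variational integrator defined by the discrete Euler–Lagrange equations of the
discrete Lagrangian `L_d(q,q̄) = h Σᵢ bᵢ L(Qᵢ, Q̇ᵢ)` (internal stages
`Qᵢ = q + h Σⱼ aᵢⱼ Q̇ⱼ`, extremal subject to `q̄ = q + h Σᵢ bᵢ Q̇ᵢ`, which is encoded by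
the Lagrange-multiplier stationarity condition `hstat`), with discrete momenta
`p = −D₁L_d(q,q̄)` and `p̄ = D₂L_d(q,q̄)`, is equivalent to the partitioned Runge–Kutta
method with coefficients `(aᵢⱼ, āᵢⱼ, bᵢ)` — where `bᵢ āᵢⱼ + bⱼ aⱼᵢ = bᵢ bⱼ` — applied to
the 'Hamiltonian' differential-algebraic system `p = α(q)`, `ṗ = Dα(q)ᵀ q̇ − ∇H(q)`. -/
theorem variational_integrator_eq_partitioned_runge_kutta
    {n s : ℕ} (hn : Even n)
    (α : (Fin n → ℝ) → (Fin n → ℝ)) (H : (Fin n → ℝ) → ℝ)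
    (hα : ContDiff ℝ (⊤ : ℕ∞) α) (hH : ContDiff ℝ (⊤ : ℕ∞) H)
    (A Abar : Matrix (Fin s) (Fin s) ℝ) (b : Fin s → ℝ)
    (hb : ∀ i, b i ≠ 0)
    (hsymp : ∀ i j, b i * Abar i j + b j * A j i = b i * b j)
    (h : ℝ) (hh : 0 < h)
    -- the internal stages and the Lagrange multiplier, as functions of `(q, q̄)`
    (Qs Qd : (Fin n → ℝ) → (Fin n → ℝ) → Fin s → (Fin n → ℝ))
    (lam : (Fin n → ℝ) → (Fin n → ℝ) → (Fin n → ℝ))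
    (hQsdiff : ∀ i, Differentiable ℝ (fun x : (Fin n → ℝ) × (Fin n → ℝ) => Qs x.1 x.2 i))
    (hQddiff : ∀ i, Differentiable ℝ (fun x : (Fin n → ℝ) × (Fin n → ℝ) => Qd x.1 x.2 i))
    (hlamdiff : Differentiable ℝ (fun x : (Fin n → ℝ) × (Fin n → ℝ) => lam x.1 x.2))
    -- the internal-stage relation
    (hstage : ∀ q qbar i, Qs q qbar i = q + h • ∑ j, A i j • Qd q qbar j)
    -- the constraint `q̄ = q + h Σᵢ bᵢ Q̇ᵢ`
    (hconstraint : ∀ q qbar, qbar = q + h • ∑ i, b i • Qd q qbar i)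
    -- stationarity of `h Σᵢ bᵢ L(Qᵢ,Q̇ᵢ)` in the `Q̇ⱼ` subject to the constraint,
    -- with Lagrange multiplier `λ`
    (hstat : ∀ q qbar j,
      (h * b j) • lam q qbar
        = (h * b j) • α (Qs q qbar j)
          + (h ^ 2) • ∑ i, (b i * A i j) •
              ((jac α (Qs q qbar i))ᵀ *ᵥ Qd q qbar i - grad H (Qs q qbar i)))
    -- the discrete Lagrangian
    (Ld : (Fin n → ℝ) → (Fin n → ℝ) → ℝ)
    (hLd : ∀ q qbar, Ld q qbar
      = h * ∑ i, b i * (α (Qs q qbar i) ⬝ᵥ Qd q qbar i - H (Qs q qbar i))) :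
    ∀ q qbar : Fin n → ℝ,
      ∀ (p pbar : Fin n → ℝ) (P Pd : Fin s → (Fin n → ℝ)),
        -- discrete momenta: `p = −D₁L_d(q,q̄)`, `p̄ = D₂L_d(q,q̄)`
        (p = fun μ => -(fderiv ℝ (fun x => Ld x qbar) q (Pi.single μ 1))) →
        (pbar = fun μ => fderiv ℝ (fun x => Ld q x) qbar (Pi.single μ 1)) →
        (P = fun i => α (Qs q qbar i)) →
        (Pd = fun i => (jac α (Qs q qbar i))ᵀ *ᵥ Qd q qbar i - grad H (Qs q qbar i)) →
        -- ... then the partitioned Runge–Kutta equations for the DAE hold: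
        (∀ i, P i = α (Qs q qbar i)) ∧
        (∀ i, Pd i = (jac α (Qs q qbar i))ᵀ *ᵥ Qd q qbar i - grad H (Qs q qbar i)) ∧
        (∀ i, Qs q qbar i = q + h • ∑ j, A i j • Qd q qbar j) ∧
        (∀ i, P i = p + h • ∑ j, Abar i j • Pd j) ∧
        (qbar = q + h • ∑ j, b j • Qd q qbar j) ∧
        (pbar = p + h • ∑ j, b j • Pd j) := by
  intro q qbar p pbar P Pd hp hpbar hP hPd
  have hαd : Differentiable ℝ α := hα.differentiable (by simp)
  have hHd : Differentiable ℝ H := hH.differentiable (by simp)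
  -- differentiability in each slot
  have hQs1 : ∀ i, Differentiable ℝ (fun x => Qs x qbar i) := fun i =>
    (hQsdiff i).comp (differentiable_fun_id.prodMk (differentiable_const qbar))
  have hQd1 : ∀ i, Differentiable ℝ (fun x => Qd x qbar i) := fun i =>
    (hQddiff i).comp (differentiable_fun_id.prodMk (differentiable_const qbar))
  have hQs2 : ∀ i, Differentiable ℝ (fun x => Qs q x i) := fun i =>
    (hQsdiff i).comp ((differentiable_const q).prodMk differentiable_fun_id)
  have hQd2 : ∀ i, Differentiable ℝ (fun x => Qd q x i) := fun i =>
    (hQddiff i).comp ((differentiable_const q).prodMk differentiable_fun_id)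
  -- derivative of Ld in each slot, via fderiv_Ld_aux
  have hLd1 : ∀ v, fderiv ℝ (fun x => Ld x qbar) q v
      = h * ∑ i, b i * (((jac α (Qs q qbar i))ᵀ *ᵥ Qd q qbar i - grad H (Qs q qbar i)) ⬝ᵥ fderiv ℝ (fun x => Qs x qbar i) q v
          + α (Qs q qbar i) ⬝ᵥ fderiv ℝ (fun x => Qd x qbar i) q v) := by
    intro v
    have e : (fun x => Ld x qbar)
        = fun x => h * ∑ i, b i * (α (Qs x qbar i) ⬝ᵥ Qd x qbar i - H (Qs x qbar i)) :=
      funext fun x => hLd x qbar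
    rw [e]
    exact fderiv_Ld_aux α H hαd hHd b h (fun i x => Qs x qbar i) (fun i x => Qd x qbar i)
      hQs1 hQd1 q v
  have hLd2 : ∀ v, fderiv ℝ (fun x => Ld q x) qbar v
      = h * ∑ i, b i * (((jac α (Qs q qbar i))ᵀ *ᵥ Qd q qbar i - grad H (Qs q qbar i)) ⬝ᵥ fderiv ℝ (fun x => Qs q x i) qbar v
          + α (Qs q qbar i) ⬝ᵥ fderiv ℝ (fun x => Qd q x i) qbar v) := by
    intro v
    have e : (fun x => Ld q x)
        = fun x => h * ∑ i, b i * (α (Qs q x i) ⬝ᵥ Qd q x i - H (Qs q x i)) :=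
      funext fun x => hLd q x
    rw [e]
    exact fderiv_Ld_aux α H hαd hHd b h (fun i x => Qs q x i) (fun i x => Qd q x i)
      hQs2 hQd2 qbar v
  -- derivatives of the internal stages
  have hdQs1 : ∀ i v, fderiv ℝ (fun x => Qs x qbar i) q v
      = v + h • ∑ j, A i j • fderiv ℝ (fun x => Qd x qbar j) q v := by
    intro i v
    have e : (fun x => Qs x qbar i) = fun x => x + h • ∑ j, A i j • Qd x qbar j :=
      funext fun x => hstage x qbar i
    rw [e]
    exact fderiv_affine_comb h (A i) (fun j x => Qd x qbar j) hQd1 q v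
  have hdQs2 : ∀ i v, fderiv ℝ (fun x => Qs q x i) qbar v
      = (0 : Fin n → ℝ) + h • ∑ j, A i j • fderiv ℝ (fun x => Qd q x j) qbar v := by
    intro i v
    have e : (fun x => Qs q x i) = fun x => q + h • ∑ j, A i j • Qd q x j :=
      funext fun x => hstage q x i
    rw [e]
    exact fderiv_affine_comb_const q h (A i) (fun j x => Qd q x j) hQd2 qbar v
  -- derivatives of the constraint
  have hdc1 : ∀ v, h • ∑ i, b i • fderiv ℝ (fun x => Qd x qbar i) q v = -v := by
    intro v
    have e : (fun x : Fin n → ℝ => x + h • ∑ i, b i • Qd x qbar i) = fun _ => qbar :=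
      funext fun x => (hconstraint x qbar).symm
    have h0 : fderiv ℝ (fun x : Fin n → ℝ => x + h • ∑ i, b i • Qd x qbar i) q v = 0 := by
      rw [e, fderiv_fun_const]; rfl
    have h1 := fderiv_affine_comb h b (fun i x => Qd x qbar i) hQd1 q v
    rw [h0] at h1
    have h2 := h1.symm
    rw [add_comm] at h2
    exact eq_neg_of_add_eq_zero_left h2
  have hdc2 : ∀ v, h • ∑ i, b i • fderiv ℝ (fun x => Qd q x i) qbar v = v := by
    intro v
    have e : (fun x : Fin n → ℝ => q + h • ∑ i, b i • Qd q x i) = fun x => x :=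
      funext fun x => (hconstraint q x).symm
    have h0 : fderiv ℝ (fun x : Fin n → ℝ => q + h • ∑ i, b i • Qd q x i) qbar v = v := by
      rw [e, fderiv_id']; rfl
    have h1 := fderiv_affine_comb_const q h b (fun i x => Qd q x i) hQd2 qbar v
    rw [h0, zero_add] at h1
    exact h1.symm
  -- scalar form of the stationarity condition
  have hstat' : ∀ (j : Fin s) (w : Fin n → ℝ),
      (h * b j) * (lam q qbar ⬝ᵥ w)
        = (h * b j) * (α (Qs q qbar j) ⬝ᵥ w)
          + h ^ 2 * ∑ i, (b i * A i j) * (((jac α (Qs q qbar i))ᵀ *ᵥ Qd q qbar i - grad H (Qs q qbar i)) ⬝ᵥ w) := by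
    intro j w
    have e := congrArg (fun z => z ⬝ᵥ w) (hstat q qbar j)
    simp only [add_dotProduct, smul_dotProduct, smul_eq_mul] at e
    rw [sum_dotProduct' Finset.univ _ w] at e
    simp only [smul_dotProduct, smul_eq_mul, Finset.mul_sum] at e ⊢
    convert e using 2
  -- the key algebraic identity
  have key : ∀ (c d : Fin n → ℝ) (u : Fin s → (Fin n → ℝ)),
      h • ∑ i, b i • u i = d →
      h * ∑ i, b i * (((jac α (Qs q qbar i))ᵀ *ᵥ Qd q qbar i - grad H (Qs q qbar i)) ⬝ᵥ (c + h • ∑ j, A i j • u j) + α (Qs q qbar i) ⬝ᵥ u i)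
        = (h • ∑ i, b i • ((jac α (Qs q qbar i))ᵀ *ᵥ Qd q qbar i - grad H (Qs q qbar i))) ⬝ᵥ c + lam q qbar ⬝ᵥ d := by
    intro c d u hd
    subst hd
    have expand : ∀ i, h * (b i * (((jac α (Qs q qbar i))ᵀ *ᵥ Qd q qbar i - grad H (Qs q qbar i)) ⬝ᵥ (c + h • ∑ j, A i j • u j)
          + α (Qs q qbar i) ⬝ᵥ u i))
        = h * b i * (((jac α (Qs q qbar i))ᵀ *ᵥ Qd q qbar i - grad H (Qs q qbar i)) ⬝ᵥ c)
          + (∑ j, h ^ 2 * ((b i * A i j) * (((jac α (Qs q qbar i))ᵀ *ᵥ Qd q qbar i - grad H (Qs q qbar i)) ⬝ᵥ u j)))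
          + h * b i * (α (Qs q qbar i) ⬝ᵥ u i) := by
      intro i
      rw [dotProduct_add, dotProduct_smul, dotProduct_sum' Finset.univ (((jac α (Qs q qbar i))ᵀ *ᵥ Qd q qbar i - grad H (Qs q qbar i))) _]
      have e2 : ∑ j, ((jac α (Qs q qbar i))ᵀ *ᵥ Qd q qbar i - grad H (Qs q qbar i)) ⬝ᵥ (A i j • u j) = ∑ j, A i j * (((jac α (Qs q qbar i))ᵀ *ᵥ Qd q qbar i - grad H (Qs q qbar i)) ⬝ᵥ u j) :=
        Finset.sum_congr rfl fun j _ => by rw [dotProduct_smul]; rfl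
      rw [e2]
      have e3 : ∑ j, h ^ 2 * ((b i * A i j) * (((jac α (Qs q qbar i))ᵀ *ᵥ Qd q qbar i - grad H (Qs q qbar i)) ⬝ᵥ u j))
          = h ^ 2 * b i * ∑ j, A i j * (((jac α (Qs q qbar i))ᵀ *ᵥ Qd q qbar i - grad H (Qs q qbar i)) ⬝ᵥ u j) := by
        rw [Finset.mul_sum]
        exact Finset.sum_congr rfl fun j _ => by ring
      rw [e3]
      simp only [smul_eq_mul]
      ring
    rw [Finset.mul_sum]
    rw [Finset.sum_congr rfl fun i _ => expand i]
    rw [Finset.sum_add_distrib, Finset.sum_add_distrib]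
    -- handle the middle double sum via hstat'
    have emid : ∑ i, (∑ j, h ^ 2 * ((b i * A i j) * (((jac α (Qs q qbar i))ᵀ *ᵥ Qd q qbar i - grad H (Qs q qbar i)) ⬝ᵥ u j)))
        = ∑ j, (h * b j * (lam q qbar ⬝ᵥ u j) - h * b j * (α (Qs q qbar j) ⬝ᵥ u j)) := by
      rw [Finset.sum_comm]
      refine Finset.sum_congr rfl fun j _ => ?_
      have := hstat' j (u j)
      rw [Finset.mul_sum] at this
      linarith [this]
    rw [emid]
    have erhs1 : (h • ∑ i, b i • ((jac α (Qs q qbar i))ᵀ *ᵥ Qd q qbar i - grad H (Qs q qbar i))) ⬝ᵥ c = ∑ i, h * b i * (((jac α (Qs q qbar i))ᵀ *ᵥ Qd q qbar i - grad H (Qs q qbar i)) ⬝ᵥ c) := by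
      rw [smul_dotProduct, sum_dotProduct' Finset.univ _ c, smul_eq_mul, Finset.mul_sum]
      exact Finset.sum_congr rfl fun i _ => by rw [smul_dotProduct]; simp [smul_eq_mul]; ring
    have erhs2 : lam q qbar ⬝ᵥ (h • ∑ i, b i • u i) = ∑ i, h * b i * (lam q qbar ⬝ᵥ u i) := by
      rw [dotProduct_smul, dotProduct_sum' Finset.univ _ _, smul_eq_mul, Finset.mul_sum]
      exact Finset.sum_congr rfl fun i _ => by rw [dotProduct_smul]; simp [smul_eq_mul]; ring
    rw [erhs1, erhs2, Finset.sum_sub_distrib]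
    ring
  -- formulas for the discrete momenta
  have hpμ : ∀ μ, p μ = lam q qbar μ - (h • ∑ i, b i • ((jac α (Qs q qbar i))ᵀ *ᵥ Qd q qbar i - grad H (Qs q qbar i))) μ := by
    intro μ
    rw [hp]
    simp only []
    rw [hLd1 (Pi.single μ 1)]
    have := key (Pi.single μ 1) (-(Pi.single μ 1))
      (fun j => fderiv ℝ (fun x => Qd x qbar j) q (Pi.single μ 1))
      (hdc1 (Pi.single μ 1))
    rw [show (h * ∑ i, b i * (((jac α (Qs q qbar i))ᵀ *ᵥ Qd q qbar i - grad H (Qs q qbar i)) ⬝ᵥ fderiv ℝ (fun x => Qs x qbar i) q (Pi.single μ 1)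
        + α (Qs q qbar i) ⬝ᵥ fderiv ℝ (fun x => Qd x qbar i) q (Pi.single μ 1)))
        = (h • ∑ i, b i • ((jac α (Qs q qbar i))ᵀ *ᵥ Qd q qbar i - grad H (Qs q qbar i))) ⬝ᵥ Pi.single μ 1 + lam q qbar ⬝ᵥ (-(Pi.single μ 1)) from by
      rw [← this]
      exact congrArg (h * ·) (Finset.sum_congr rfl fun i _ => by rw [hdQs1 i])]
    rw [dotProduct_neg, dotProduct_single, dotProduct_single, mul_one, mul_one]
    ring
  have hpbarμ : ∀ μ, pbar μ = lam q qbar μ := by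
    intro μ
    rw [hpbar]
    simp only []
    rw [hLd2 (Pi.single μ 1)]
    have := key (0 : Fin n → ℝ) (Pi.single μ 1)
      (fun j => fderiv ℝ (fun x => Qd q x j) qbar (Pi.single μ 1))
      (hdc2 (Pi.single μ 1))
    rw [show (h * ∑ i, b i * (((jac α (Qs q qbar i))ᵀ *ᵥ Qd q qbar i - grad H (Qs q qbar i)) ⬝ᵥ fderiv ℝ (fun x => Qs q x i) qbar (Pi.single μ 1)
        + α (Qs q qbar i) ⬝ᵥ fderiv ℝ (fun x => Qd q x i) qbar (Pi.single μ 1)))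
        = (h • ∑ i, b i • ((jac α (Qs q qbar i))ᵀ *ᵥ Qd q qbar i - grad H (Qs q qbar i))) ⬝ᵥ (0 : Fin n → ℝ) + lam q qbar ⬝ᵥ Pi.single μ 1 from by
      rw [← this]
      exact congrArg (h * ·) (Finset.sum_congr rfl fun i _ => by rw [hdQs2 i])]
    rw [dotProduct_zero, dotProduct_single, mul_one, zero_add]
  -- assemble the conclusions
  refine ⟨fun i => by rw [hP], fun i => by rw [hPd], fun i => hstage q qbar i, ?_, 
    hconstraint q qbar, ?_⟩
  · -- P i = p + h • ∑ j, Abar i j • Pd j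
    intro i
    rw [hP, hPd]
    funext μ
    simp only [Pi.add_apply, Pi.smul_apply, Finset.sum_apply, smul_eq_mul]
    rw [hpμ μ]
    simp only [Pi.smul_apply, Finset.sum_apply, smul_eq_mul]
    have hstatμ := congrFun (hstat q qbar i) μ
    simp only [Pi.smul_apply, Pi.add_apply, Finset.sum_apply, smul_eq_mul] at hstatμ
    -- hstatμ : h * b i * lam μ = h * b i * α μ + h^2 * ∑ k, (b k * A k i) * ((jac α (Qs q qbar k))ᵀ *ᵥ Qd q qbar k - grad H (Qs q qbar k)) μ
    apply mul_left_cancel₀ (hb i)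
    have h1 : b i * lam q qbar μ
        = b i * α (Qs q qbar i) μ
          + h * ∑ k, (b k * A k i) * (((jac α (Qs q qbar k))ᵀ *ᵥ Qd q qbar k - grad H (Qs q qbar k)) μ) := by
      apply mul_left_cancel₀ (ne_of_gt hh)
      linear_combination hstatμ
    have hs : b i * (∑ j, Abar i j * ((jac α (Qs q qbar j))ᵀ *ᵥ Qd q qbar j - grad H (Qs q qbar j)) μ)
        = b i * (∑ j, b j * ((jac α (Qs q qbar j))ᵀ *ᵥ Qd q qbar j - grad H (Qs q qbar j)) μ) - ∑ j, (b j * A j i) * ((jac α (Qs q qbar j))ᵀ *ᵥ Qd q qbar j - grad H (Qs q qbar j)) μ := by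
      rw [Finset.mul_sum, Finset.mul_sum, ← Finset.sum_sub_distrib]
      refine Finset.sum_congr rfl fun j _ => ?_
      linear_combination ((jac α (Qs q qbar j))ᵀ *ᵥ Qd q qbar j - grad H (Qs q qbar j)) μ * hsymp i j
    linear_combination -h1 - h * hs
  · -- pbar = p + h • ∑ j, b j • Pd j
    rw [hPd]
    funext μ
    simp only [Pi.add_apply, Pi.smul_apply, Finset.sum_apply, smul_eq_mul]
    rw [hpbarμ μ, hpμ μ]
    simp only [Pi.smul_apply, Finset.sum_apply, smul_eq_mul]
    ring
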